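/- Let θ < θ̃ < 0. Then the function G(τ) = (τ^{θ̃−1} + (1−τ)^{θ̃−1})/(τ^{θ−1} + (1−τ)^{θ−1}) is strictly decreasing on the interval (1/2, 1). -/

import Mathlib

open Real

/-- The function `G(τ) = (τ^{θ̃−1} + (1−τ)^{θ̃−1}) / (τ^{θ−1} + (1−τ)^{θ−1})`. -/
noncomputable def Gfun (θ θt : ℝ) (τ : ℝ) : ℝ :=
  (τ ^ (θt - 1) + (1 - τ) ^ (θt - 1)) / (τ ^ (θ - 1) + (1 - τ) ^ (θ - 1))

lemma key_alg (a c b d A C P Q : ℝ) (hc : 0 < c) (hca : c < a)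
    (hdb : d < b) (hb0 : b < 0) (hA : 0 < A) (hC : 0 < C)
    (hQ : 0 < Q) (hPQ : Q < P) (hT1 : A*A*P*c < C*C*Q*a) :
    (b - d) * (A*A*P*c - C*C*Q*a)
      + A*C*(b*(P*c - Q*a) + d*(P*a - Q*c)) < 0 := by
  have h1 : (b - d) * (A*A*P*c - C*C*Q*a) < 0 :=
    mul_neg_of_pos_of_neg (by linarith) (by linarith)
  have hPaQc : 0 < P*a - Q*c := by nlinarith
  have h2 : d*(P*a - Q*c) < b*(P*a - Q*c) :=
    mul_lt_mul_of_pos_right hdb hPaQc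
  have h3 : b*(P*c - Q*a) + b*(P*a - Q*c) = b*(P-Q)*(a+c) := by ring
  have h4 : b*(P-Q)*(a+c) < 0 := by
    have : 0 < (P-Q)*(a+c) := by nlinarith
    nlinarith
  have h5 : b*(P*c - Q*a) + d*(P*a - Q*c) < 0 := by nlinarith
  nlinarith [mul_pos hA hC, mul_neg_of_pos_of_neg (mul_pos hA hC) h5]

lemma key (a c b d : ℝ) (hc : 0 < c) (hca : c < a) (hdb : d < b) (hb0 : b < 0) :
    (b * a^(b-1) - b * c^(b-1)) * (a^d + c^d)
      - (a^b + c^b) * (d * a^(d-1) - d * c^(d-1)) < 0 := by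
  have ha : 0 < a := hc.trans hca
  set A := a^d with hAdef
  set C := c^d with hCdef
  set P := a^(b-d) with hPdef
  set Q := c^(b-d) with hQdef
  have hA : 0 < A := rpow_pos_of_pos ha d
  have hC : 0 < C := rpow_pos_of_pos hc d
  have hP : 0 < P := rpow_pos_of_pos ha _
  have hQ : 0 < Q := rpow_pos_of_pos hc _
  have hPQ : Q < P := rpow_lt_rpow hc.le hca (by linarith)
  have hab : a^b = A * P := by
    rw [hAdef, hPdef, ← rpow_add ha]; ring_nf
  have hcb : c^b = C * Q := by
    rw [hCdef, hQdef, ← rpow_add hc]; ring_nf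
  have hab1 : a^(b-1) = A * P / a := by
    rw [rpow_sub ha, hab, rpow_one]
  have hcb1 : c^(b-1) = C * Q / c := by
    rw [rpow_sub hc, hcb, rpow_one]
  have had1 : a^(d-1) = A / a := by
    rw [rpow_sub ha, hAdef, rpow_one]
  have hcd1 : c^(d-1) = C / c := by
    rw [rpow_sub hc, hCdef, rpow_one]
  have hT1 : A*A*P*c < C*C*Q*a := by
    have e1 : A*A*P = a^(b+d) := by
      rw [hAdef, hPdef, ← rpow_add ha, ← rpow_add ha]; ring_nf
    have e2 : C*C*Q = c^(b+d) := by
      rw [hCdef, hQdef, ← rpow_add hc, ← rpow_add hc]; ring_nf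
    rw [e1, e2]
    have h1 : a^(b+d) < c^(b+d) := rpow_lt_rpow_of_neg hc hca (by linarith)
    have h2 : (0:ℝ) < c^(b+d) := rpow_pos_of_pos hc _
    have h3 : (0:ℝ) < a^(b+d) := rpow_pos_of_pos ha _
    nlinarith
  have hkey := key_alg a c b d A C P Q hc hca hdb hb0 hA hC hQ hPQ hT1
  rw [hab, hcb, hab1, hcb1, had1, hcd1]
  have hac : 0 < a * c := mul_pos ha hc
  have expand : (b * (A * P / a) - b * (C * Q / c)) * (A + C)
      - (A * P + C * Q) * (d * (A / a) - d * (C / c))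
      = ((b - d) * (A*A*P*c - C*C*Q*a)
      + A*C*(b*(P*c - Q*a) + d*(P*a - Q*c))) / (a*c) := by
    field_simp
    ring
  rw [expand]
  exact div_neg_of_neg_of_pos hkey hac

lemma sum_hasDerivAt (p τ : ℝ) (h0 : 0 < τ) (h1 : τ < 1) :
    HasDerivAt (fun t : ℝ => t ^ p + (1 - t) ^ p)
      (p * τ ^ (p - 1) - p * (1 - τ) ^ (p - 1)) τ := by
  have hτ : τ ≠ 0 := ne_of_gt h0
  have h1τ : (1 : ℝ) - τ ≠ 0 := by linarith
  have hd1 : HasDerivAt (fun t : ℝ => t ^ p) (p * τ ^ (p - 1)) τ :=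
    Real.hasDerivAt_rpow_const (Or.inl hτ)
  have hd2 : HasDerivAt (fun t : ℝ => (1 : ℝ) - t) (-1) τ := by
    simpa using (hasDerivAt_id τ).const_sub 1
  have hd3 : HasDerivAt (fun t : ℝ => (1 - t) ^ p)
      (p * (1 - τ) ^ (p - 1) * (-1)) τ :=
    (Real.hasDerivAt_rpow_const (Or.inl h1τ)).comp τ hd2
  have := hd1.add hd3
  exact this.congr_deriv (by ring)

lemma Gfun_hasDerivAt (θ θt τ : ℝ) (h0 : 0 < τ) (h1 : τ < 1) :
    HasDerivAt (Gfun θ θt)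
      ((((θt - 1) * τ ^ (θt - 1 - 1) - (θt - 1) * (1 - τ) ^ (θt - 1 - 1))
            * (τ ^ (θ - 1) + (1 - τ) ^ (θ - 1))
          - (τ ^ (θt - 1) + (1 - τ) ^ (θt - 1))
            * ((θ - 1) * τ ^ (θ - 1 - 1) - (θ - 1) * (1 - τ) ^ (θ - 1 - 1)))
        / (τ ^ (θ - 1) + (1 - τ) ^ (θ - 1)) ^ 2) τ := by
  have hD : τ ^ (θ - 1) + (1 - τ) ^ (θ - 1) ≠ 0 := by
    have := rpow_pos_of_pos h0 (θ - 1)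
    have := rpow_pos_of_pos (by linarith : (0:ℝ) < 1 - τ) (θ - 1)
    positivity
  exact (sum_hasDerivAt (θt - 1) τ h0 h1).div (sum_hasDerivAt (θ - 1) τ h0 h1) hD

/-- for `θ < θ̃ < 0`, the function `G` is strictly decreasing on `(1/2, 1)`. -/
theorem Gfun_strictAntiOn (θ θt : ℝ) (hθ : θ < θt) (hθt : θt < 0) :
    StrictAntiOn (Gfun θ θt) (Set.Ioo (1 / 2 : ℝ) 1) := by
  have hmem : ∀ τ ∈ Set.Ioo (1 / 2 : ℝ) 1, 0 < τ ∧ τ < 1 := by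
    rintro τ ⟨h1, h2⟩; exact ⟨by linarith, h2⟩
  apply strictAntiOn_of_deriv_neg (convex_Ioo _ _)
  · intro τ hτ
    obtain ⟨h0, h1⟩ := hmem τ hτ
    exact (Gfun_hasDerivAt θ θt τ h0 h1).differentiableAt.continuousAt.continuousWithinAt
  · intro τ hτ
    rw [interior_Ioo] at hτ
    obtain ⟨h0, h1⟩ := hmem τ hτ
    have hc : 0 < 1 - τ := by linarith
    have hca : 1 - τ < τ := by
      have := hτ.1; linarith
    rw [(Gfun_hasDerivAt θ θt τ h0 h1).deriv]
    apply div_neg_of_neg_of_pos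
    · have := key τ (1 - τ) (θt - 1) (θ - 1) hc hca (by linarith) (by linarith)
      linarith [this]
    · have h2 : (0:ℝ) < τ ^ (θ - 1) := rpow_pos_of_pos h0 _
      have h3 : (0:ℝ) < (1 - τ) ^ (θ - 1) := rpow_pos_of_pos hc _
      positivity
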